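/- Let a₁,…,aₘ ∈ ℂ and x₁,…,xₙ ∈ ℂ. If rₖ ≥ 0 with ∑ₖ rₖ > 0 and rₖ(|Re xⱼ| + |Im xⱼ|) ≤ Re aₖ · Re xⱼ − Im aₖ · Im xⱼ for all j, k, then ∑ⱼ (|Re xⱼ| + |Im xⱼ|) ≤ (|∑ₖ aₖ| / ∑ₖ rₖ) · (|∑ⱼ Re xⱼ| + |∑ⱼ Im xⱼ|). -/

import Mathlib

theorem stmt_16 {m n : ℕ} (a : Fin m → ℂ) (x : Fin n → ℂ)
    (r : Fin m → ℝ) (hr : ∀ k, 0 ≤ r k) (hrs : 0 < ∑ k, r k)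
    (h : ∀ j k, r k * (|(x j).re| + |(x j).im|) ≤
      (a k).re * (x j).re - (a k).im * (x j).im) :
    ∑ j, (|(x j).re| + |(x j).im|) ≤
      (‖∑ k, a k‖ / ∑ k, r k) *
        (|∑ j, (x j).re| + |∑ j, (x j).im|) := by
  set A := ∑ k, a k with hA
  set X := ∑ j, x j with hX
  have hXre : (∑ j, (x j).re) = X.re := by simp [hX, Complex.re_sum]
  have hXim : (∑ j, (x j).im) = X.im := by simp [hX, Complex.im_sum]
  have h1 : (∑ k, r k) * (∑ j, (|(x j).re| + |(x j).im|)) ≤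
      A.re * X.re - A.im * X.im := by
    rw [Finset.mul_sum]
    have : A.re * X.re - A.im * X.im =
        ∑ j, ((A.re) * (x j).re - (A.im) * (x j).im) := by
      rw [← hXre, ← hXim, Finset.mul_sum, Finset.mul_sum, ← Finset.sum_sub_distrib]
    rw [this]
    apply Finset.sum_le_sum
    intro j _
    calc (∑ k, r k) * (|(x j).re| + |(x j).im|)
        = ∑ k, r k * (|(x j).re| + |(x j).im|) := by rw [Finset.sum_mul]
      _ ≤ ∑ k, ((a k).re * (x j).re - (a k).im * (x j).im) :=
          Finset.sum_le_sum fun k _ => h j k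
      _ = A.re * (x j).re - A.im * (x j).im := by
          simp [hA, Complex.re_sum, Complex.im_sum, Finset.sum_sub_distrib,
            Finset.sum_mul]
  have h2 : A.re * X.re - A.im * X.im ≤ ‖A‖ * (|X.re| + |X.im|) := by
    have : A.re * X.re - A.im * X.im = (A * X).re := by
      simp [Complex.mul_re]
    rw [this]
    calc (A * X).re ≤ ‖A * X‖ := Complex.re_le_norm _
      _ = ‖A‖ * ‖X‖ := norm_mul _ _
      _ ≤ ‖A‖ * (|X.re| + |X.im|) :=
          mul_le_mul_of_nonneg_left (Complex.norm_le_abs_re_add_abs_im X)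
            (norm_nonneg _)
  rw [hXre, hXim, div_mul_eq_mul_div, le_div_iff₀ hrs, mul_comm]
  linarith
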